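/- For every simple graph G on n vertices and every natural number k with 1 ≤ k ≤ n, there exists an incomplete table T with n tuples over a schema of n+1 attributes R = {X} ∪ Y (with |Y| = n), in which the X-column contains n pairwise distinct non-⊥ values, such that G contains a clique of size k if and only if g3({X} ×_sp Y) ≤ 1 − k/n. -/

import Mathlib

/- Common framework: incomplete tables, strongly possible worlds and constraints.
   A tuple assigns each attribute a value in `Option V`, with `none` encoding the
   null marker ⊥.  In the degenerate case of an attribute whose active domain is
   empty, the fresh symbol `s` (outside all domains) is encoded by `none` in the
   strongly possible world: it is a single fixed symbol, equal only to itself and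
   different from every domain value, exactly as `none` behaves. -/

namespace SPDB

variable {α V : Type} [DecidableEq α] [DecidableEq V]

/-- A tuple over attribute type `α` with values in `V`; `none` is the null ⊥. -/
abbrev Tuple (α V : Type) := α → Option V

/-- An incomplete table: a finite multiset of tuples. -/
abbrev Table (α V : Type) := Multiset (Tuple α V)

/-- The active domain of attribute `A` in table `T`: the non-null values in column `A`. -/
def VD (T : Table α V) (A : α) : Finset V :=
  (T.filterMap fun t => t A).toFinset

/-- `t'` is a strongly possible extension of `t` w.r.t. the active domains of `T`:
non-null entries are kept, each null is replaced by an active domain value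
(by the fresh symbol, encoded `none`, if the active domain is empty). -/
def spExt (T : Table α V) (t t' : Tuple α V) : Prop :=
  ∀ A, (t A ≠ none → t' A = t A) ∧
       (t A = none → if (VD T A).Nonempty then ∃ v ∈ VD T A, t' A = some v
                     else t' A = none)

/-- `T'` is a strongly possible world of `T`. -/
def spWorld (T T' : Table α V) : Prop := Multiset.Rel (spExt T) T T'

/-- Two tuples agree on the attribute set `X`. -/
def agrees (X : Finset α) (t1 t2 : Tuple α V) : Prop := ∀ A ∈ X, t1 A = t2 A

/-- Weak similarity on the attribute set `X`. -/
def weakSim (X : Finset α) (t1 t2 : Tuple α V) : Prop :=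
  ∀ A ∈ X, t1 A = t2 A ∨ t1 A = none ∨ t2 A = none

/-- `t` is `X`-total: no nulls among the attributes of `X`. -/
def isTotal (X : Finset α) (t : Tuple α V) : Prop := ∀ A ∈ X, t A ≠ none

instance (X : Finset α) : DecidablePred (isTotal (V := V) X) := fun t =>
  decidable_of_iff (∀ A ∈ X, t A ≠ none) Iff.rfl

/-- Projection of a tuple to the attribute set `X` (nulls outside `X`). -/
def proj (X : Finset α) (t : Tuple α V) : Tuple α V :=
  fun A => if A ∈ X then t A else none

/-- A (complete) table satisfies the key `K`: tuple occurrences are pairwise distinct on `K`. -/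
def keyOn (K : Finset α) (T' : Table α V) : Prop := (T'.map (proj K)).Nodup

/-- A (complete) table satisfies the functional dependency `X → Y`. -/
def FD (X Y : Finset α) (T' : Table α V) : Prop :=
  ∀ t1 ∈ T', ∀ t2 ∈ T', agrees X t1 t2 → agrees Y t1 t2

/-- A (complete) table over schema `R` satisfies the multivalued dependency `X ↠ Y`. -/
def MVD (R X Y : Finset α) (T' : Table α V) : Prop :=
  ∀ t1 ∈ T', ∀ t2 ∈ T', agrees X t1 t2 →
    ∃ t ∈ T', agrees (X ∪ Y) t t1 ∧ agrees (X ∪ (R \ Y)) t t2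

/-- A (complete) table satisfies the cross join `X × Y`. -/
def CJ (X Y : Finset α) (T' : Table α V) : Prop :=
  ∀ t1 ∈ T', ∀ t2 ∈ T', ∃ t ∈ T', agrees X t t1 ∧ agrees Y t t2

/-- `K` is a strongly possible key of `T`: `sp⟨K⟩`. -/
def spKey (T : Table α V) (K : Finset α) : Prop :=
  ∃ T', spWorld T T' ∧ keyOn K T'

/-- The strongly possible functional dependency `X →_sp Y` holds in `T`. -/
def spFD (T : Table α V) (X Y : Finset α) : Prop :=
  ∃ T', spWorld T T' ∧ FD X Y T'

/-- The strongly possible multivalued dependency `X ↠_sp Y` holds in `T` over schema `R`. -/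
def spMVD (R : Finset α) (T : Table α V) (X Y : Finset α) : Prop :=
  ∃ T', spWorld T T' ∧ MVD R X Y T'

/-- The strongly possible cross join `X ×_sp Y` holds in `T`. -/
def spCJ (T : Table α V) (X Y : Finset α) : Prop :=
  ∃ T', spWorld T T' ∧ CJ X Y T'

/-- Lien's null multivalued dependency `X ↠ Y` over schema `R`. -/
def NMVD (R : Finset α) (T : Table α V) (X Y : Finset α) : Prop :=
  ∀ t1 ∈ T, ∀ t2 ∈ T, isTotal X t1 → isTotal X t2 → agrees X t1 t2 →
    ∃ t ∈ T, agrees (X ∪ Y) t t1 ∧ agrees (X ∪ (R \ Y)) t t2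

/-- The minimum number of tuples whose removal from `T` makes `P` hold
(`T = T₀ + S` means that `S` is a submultiset of `T` and `T₀ = T ∖ S`). -/
noncomputable def g3Card (T : Table α V) (P : Table α V → Prop) : ℕ :=
  sInf {n : ℕ | ∃ T₀ S : Table α V, T = T₀ + S ∧ P T₀ ∧ Multiset.card S = n}

/-- `g3`: the minimum, over submultisets `S` of `T` whose removal makes the
constraint `P` hold, of `|S|/|T|`. -/
noncomputable def g3 (T : Table α V) (P : Table α V → Prop) : ℚ :=
  (g3Card T P : ℚ) / (Multiset.card T : ℚ)

/-- The minimum number of tuples whose addition to `T` makes `P` hold. -/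
noncomputable def g5Card (T : Table α V) (P : Table α V → Prop) : ℕ :=
  sInf {n : ℕ | ∃ S : Table α V, P (T + S) ∧ Multiset.card S = n}

/-- `g5`: the minimum, over finite multisets `S` of tuples whose addition makes
the constraint `P` hold, of `|S|/|T|`. -/
noncomputable def g5 (T : Table α V) (P : Table α V → Prop) : ℚ :=
  (g5Card T P : ℚ) / (Multiset.card T : ℚ)

end SPDB


section Aux

open SPDB Classical

variable {n : ℕ}

/-- The table encoding a graph: tuple `i` has `X`-value `i`, and in column `j` it has
value `1` if `i = j`, null if `i ~ j`, and value `0` otherwise. -/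
noncomputable def tsG (G : SimpleGraph (Fin n)) (i : Fin n) : Tuple (Unit ⊕ Fin n) ℕ :=
  fun a => match a with
  | Sum.inl _ => some i.val
  | Sum.inr j => if i = j then some 1 else if G.Adj i j then none else some 0

noncomputable def UG (G : SimpleGraph (Fin n)) (I : Finset (Fin n)) : Table (Unit ⊕ Fin n) ℕ :=
  Multiset.map (tsG G) I.val

lemma tsG_inl (G : SimpleGraph (Fin n)) (i : Fin n) (u : Unit) :
    tsG G i (Sum.inl u) = some i.val := rfl

lemma tsG_injective (G : SimpleGraph (Fin n)) : Function.Injective (tsG G) := by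
  intro i j h
  have h2 := congrFun h (Sum.inl ())
  simp only [tsG_inl, Option.some.injEq] at h2
  exact Fin.val_injective h2

lemma mem_VD {α V : Type} [DecidableEq α] [DecidableEq V] {T : Table α V} {A : α} {v : V} :
    v ∈ VD T A ↔ ∃ t ∈ T, t A = some v := by
  simp [VD, Multiset.mem_filterMap]

/-- The imputed tuples in the strongly possible world witnessing a clique. -/
noncomputable def tsG' (G : SimpleGraph (Fin n)) (I : Finset (Fin n)) (i : Fin n) :
    Tuple (Unit ⊕ Fin n) ℕ :=
  fun a => match a with
  | Sum.inl _ => some i.val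
  | Sum.inr j => if j ∈ I then some 1
                 else if (VD (UG G I) (Sum.inr j)).Nonempty then some 0 else none

lemma spCJ_iff (G : SimpleGraph (Fin n)) (I : Finset (Fin n)) :
    spCJ (UG G I) ({Sum.inl ()} : Finset (Unit ⊕ Fin n)) (Finset.univ.image Sum.inr) ↔
      ∀ i ∈ I, ∀ j ∈ I, i ≠ j → G.Adj i j := by
  constructor
  · rintro ⟨T', hW, hCJ⟩ i hi j hj hij
    by_contra hadj
    -- preserved X-values identify tuples of T'
    have hrel : Multiset.Rel (fun a b => spExt (UG G I) (tsG G a) b) I.val T' := by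
      rw [← Multiset.rel_map_left]; exact hW
    obtain ⟨ti', hti'T, hti'⟩ := Multiset.exists_mem_of_rel_of_mem hrel hi
    obtain ⟨tj', htj'T, htj'⟩ := Multiset.exists_mem_of_rel_of_mem hrel hj
    have hiv : tsG G i (Sum.inr j) = some 0 := by
      simp only [tsG, if_neg hij, if_neg hadj]
    have hjv : tsG G j (Sum.inr j) = some 1 := by
      simp [tsG]
    have hti'j : ti' (Sum.inr j) = some 0 := by
      rw [(hti' (Sum.inr j)).1 (by rw [hiv]; exact Option.some_ne_none _), hiv]
    have htj'X : tj' (Sum.inl ()) = some j.val := by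
      rw [(htj' (Sum.inl ())).1 (by rw [tsG_inl]; exact Option.some_ne_none _), tsG_inl]
    obtain ⟨t, htT, htX, htY⟩ := hCJ tj' htj'T ti' hti'T
    have htXv : t (Sum.inl ()) = some j.val := by
      rw [htX (Sum.inl ()) (Finset.mem_singleton_self _), htj'X]
    have htYv : t (Sum.inr j) = some 0 := by
      rw [htY (Sum.inr j) (Finset.mem_image.2 ⟨j, Finset.mem_univ _, rfl⟩), hti'j]
    -- identify t as the extension of tsG G j
    have hrel' := Multiset.rel_flip.2 hrel
    obtain ⟨i'', hi''I, hti''⟩ := Multiset.exists_mem_of_rel_of_mem hrel' htT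
    replace hti'' : spExt (UG G I) (tsG G i'') t := hti''
    have hX'' : t (Sum.inl ()) = some i''.val := by
      rw [(hti'' (Sum.inl ())).1 (by rw [tsG_inl]; exact Option.some_ne_none _), tsG_inl]
    have heq : i'' = j := by
      rw [htXv] at hX''
      exact Fin.val_injective (Option.some.injEq _ _ ▸ hX''.symm : i''.val = j.val)
    rw [heq] at hti''
    have : t (Sum.inr j) = some 1 := by
      rw [(hti'' (Sum.inr j)).1 (by rw [hjv]; exact Option.some_ne_none _), hjv]
    rw [htYv] at this
    exact absurd (Option.some.injEq _ _ ▸ this : (0 : ℕ) = 1) (by norm_num)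
  · intro hclique
    refine ⟨Multiset.map (tsG' G I) I.val, ?_, ?_⟩
    · show Multiset.Rel (spExt (UG G I)) (UG G I) _
      have key : Multiset.Rel (spExt (UG G I)) (Multiset.map (tsG G) I.val)
          (Multiset.map (tsG' G I) I.val) := by
        rw [Multiset.rel_map]
        refine Multiset.rel_refl_of_refl_on fun i hi' => ?_
        have hi : i ∈ I := Finset.mem_val.mp hi'
        intro A
        rcases A with u | j
        · exact ⟨fun _ => rfl, fun h => absurd h (Option.some_ne_none _)⟩
        · constructor
          · intro hne
            simp only [tsG] at hne ⊢
            simp only [tsG']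
            by_cases hij : i = j
            · subst hij
              rw [if_pos rfl, if_pos hi]
            · rw [if_neg hij] at hne ⊢
              by_cases hadj : G.Adj i j
              · exact absurd (if_pos hadj) hne
              · rw [if_neg hadj] at hne ⊢
                have hjI : j ∉ I := fun hjI => hadj (hclique i hi j hjI hij)
                rw [if_neg hjI, if_pos ⟨0, mem_VD.2 ⟨tsG G i, Multiset.mem_map_of_mem _ hi,
                  by simp only [tsG, if_neg hij, if_neg hadj]⟩⟩]
          · intro hnone
            have hij : i ≠ j := by
              intro h; subst h
              simp only [tsG, if_pos rfl] at hnone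
              exact Option.some_ne_none _ hnone
            have hadj : G.Adj i j := by
              by_contra hadj
              simp only [tsG, if_neg hij, if_neg hadj] at hnone
              exact Option.some_ne_none _ hnone
            by_cases hjI : j ∈ I
            · have h1 : (1 : ℕ) ∈ VD (UG G I) (Sum.inr j) :=
                mem_VD.2 ⟨tsG G j, Multiset.mem_map_of_mem _ (Finset.mem_val.mpr hjI), by simp [tsG]⟩
              rw [if_pos ⟨1, h1⟩]
              exact ⟨1, h1, by simp only [tsG', if_pos hjI]⟩
            · by_cases hVD : (VD (UG G I) (Sum.inr j)).Nonempty
              · rw [if_pos hVD]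
                obtain ⟨v, hv⟩ := hVD
                obtain ⟨t, htU, htv⟩ := mem_VD.1 hv
                obtain ⟨i', hi', rfl⟩ := Multiset.mem_map.1 htU
                have hv0 : v = 0 := by
                  have hij' : i' ≠ j := fun h => hjI (h ▸ Finset.mem_val.mp hi')
                  simp only [tsG, if_neg hij'] at htv
                  by_cases hadj' : G.Adj i' j
                  · rw [if_pos hadj'] at htv; exact absurd htv (by simp)
                  · rw [if_neg hadj'] at htv
                    exact (Option.some.injEq _ _ ▸ htv : (0:ℕ) = v).symm
                subst hv0
                have hne : (VD (UG G I) (Sum.inr j)).Nonempty := ⟨0, hv⟩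
                exact ⟨0, hv, by simp only [tsG', if_neg hjI, if_pos hne]⟩
              · rw [if_neg hVD]
                simp only [tsG', if_neg hjI, if_neg hVD]
      exact key
    · intro t1 h1 t2 h2
      obtain ⟨i1, hi1, rfl⟩ := Multiset.mem_map.1 h1
      obtain ⟨i2, hi2, rfl⟩ := Multiset.mem_map.1 h2
      refine ⟨tsG' G I i1, h1, fun A _ => rfl, fun A hA => ?_⟩
      obtain ⟨j, _, rfl⟩ := Finset.mem_image.1 hA
      rfl

end Aux

open SPDB in
/-- for every graph `G` on `n` vertices and `1 ≤ k ≤ n` there is a table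
of `n` tuples over the `(n+1)`-attribute schema `{X} ∪ Y` whose `X`-column consists of
`n` pairwise distinct non-null values, such that `G` has a clique of size `k` iff
`g3({X} ×_sp Y) ≤ 1 - k/n`. -/
theorem statement10 (n k : ℕ) (hk1 : 1 ≤ k) (hkn : k ≤ n) (G : SimpleGraph (Fin n)) :
    ∃ ts : Fin n → Tuple (Unit ⊕ Fin n) ℕ,
      (∀ i, ts i (Sum.inl ()) ≠ none) ∧
      (Function.Injective fun i => ts i (Sum.inl ())) ∧
      ((∃ s : Finset (Fin n), G.IsNClique k s) ↔
        g3 (Multiset.map ts Finset.univ.val)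
            (fun U => spCJ U ({Sum.inl ()} : Finset (Unit ⊕ Fin n))
              (Finset.univ.image Sum.inr)) ≤ 1 - (k : ℚ) / (n : ℚ)) := by
  classical
  have hn : 0 < n := lt_of_lt_of_le hk1 hkn
  have hnQ : (0 : ℚ) < n := by exact_mod_cast hn
  refine ⟨tsG G, fun i => Option.some_ne_none _, ?_, ?_⟩
  · intro i j h
    simp only [tsG_inl, Option.some.injEq] at h
    exact Fin.val_injective h
  set P : Table (Unit ⊕ Fin n) ℕ → Prop := fun U =>
    spCJ U ({Sum.inl ()} : Finset (Unit ⊕ Fin n)) (Finset.univ.image Sum.inr) with hP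
  set T : Table (Unit ⊕ Fin n) ℕ := Multiset.map (tsG G) Finset.univ.val with hT
  have hcardT : Multiset.card T = n := by
    rw [hT, Multiset.card_map, ← Finset.card_def, Finset.card_univ, Fintype.card_fin]
  have hcast : ((n - k : ℕ) : ℚ) = (n : ℚ) - (k : ℚ) := by
    exact Nat.cast_sub hkn
  have hrhs : (1 : ℚ) - (k : ℚ) / (n : ℚ) = ((n - k : ℕ) : ℚ) / (n : ℚ) := by
    rw [hcast, sub_div, div_self hnQ.ne']
  -- the defining set of g3Card, and that it contains n
  have hnmem : n ∈ {m : ℕ | ∃ T₀ S : Table (Unit ⊕ Fin n) ℕ,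
      T = T₀ + S ∧ P T₀ ∧ Multiset.card S = m} := by
    refine ⟨0, T, (zero_add T).symm, ?_, hcardT⟩
    exact ⟨0, Multiset.rel_zero_left.2 rfl, fun t1 h1 => absurd h1 (Multiset.notMem_zero _)⟩
  constructor
  · rintro ⟨s, hs⟩
    have hmem : (n - k) ∈ {m : ℕ | ∃ T₀ S : Table (Unit ⊕ Fin n) ℕ,
        T = T₀ + S ∧ P T₀ ∧ Multiset.card S = m} := by
      refine ⟨UG G s, Multiset.map (tsG G) (Finset.univ \ s).val, ?_, ?_, ?_⟩
      · rw [hT, UG, ← Multiset.map_add]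
        congr 1
        rw [Finset.sdiff_val, add_tsub_cancel_of_le (Finset.val_le_iff.2 (Finset.subset_univ s))]
      · exact (spCJ_iff G s).2 fun i hi j hj hij => hs.1 hi hj hij
      · rw [Multiset.card_map, ← Finset.card_def, Finset.card_sdiff_of_subset (Finset.subset_univ s),
          Finset.card_univ, hs.2, Fintype.card_fin]
    have hle : g3Card T P ≤ n - k := Nat.sInf_le hmem
    rw [g3, hcardT, hrhs]
    exact (div_le_div_iff_of_pos_right hnQ).2 (by exact_mod_cast hle)
  · intro hg3
    -- g3Card T P ≤ n - k
    have hcle : g3Card T P ≤ n - k := by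
      rw [g3, hcardT, hrhs] at hg3
      have := (div_le_div_iff_of_pos_right hnQ).1 hg3
      exact_mod_cast this
    obtain ⟨T₀, S, hTsum, hPT₀, hcardS⟩ := Nat.sInf_mem (Set.nonempty_of_mem hnmem)
    -- T₀ is the image of a subset I
    have hT₀le : T₀ ≤ T := Multiset.le_iff_exists_add.2 ⟨S, hTsum⟩
    have hTnd : T.Nodup := Multiset.Nodup.map (tsG_injective G) Finset.univ.nodup
    have hT₀nd : T₀.Nodup := Multiset.nodup_of_le hT₀le hTnd
    set I : Finset (Fin n) := Finset.univ.filter (fun i => tsG G i ∈ T₀) with hI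
    have hT₀eq : T₀ = UG G I := by
      show T₀ = Multiset.map (tsG G) I.val
      rw [Multiset.Nodup.ext hT₀nd (Multiset.Nodup.map (tsG_injective G) I.nodup)]
      intro t
      constructor
      · intro ht
        obtain ⟨i, _, rfl⟩ := Multiset.mem_map.1 (Multiset.mem_of_le hT₀le ht)
        exact Multiset.mem_map_of_mem _ (Finset.mem_val.mpr (Finset.mem_filter.2 ⟨Finset.mem_univ i, ht⟩ : i ∈ I))
      · intro ht
        obtain ⟨i, hi, rfl⟩ := Multiset.mem_map.1 ht
        exact (Finset.mem_filter.1 (Finset.mem_val.mp hi : i ∈ I)).2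
    rw [show sInf {m : ℕ | ∃ T₀ S : Table (Unit ⊕ Fin n) ℕ,
        T = T₀ + S ∧ P T₀ ∧ Multiset.card S = m} = g3Card T P from rfl] at hcardS
    have hcards : n = I.card + Multiset.card S := by
      have := congrArg Multiset.card hTsum
      rw [Multiset.card_add, hcardT, hT₀eq,
        show Multiset.card (UG G I) = I.card from by
          rw [UG, Multiset.card_map, ← Finset.card_def]] at this
      exact this
    have hIk : k ≤ I.card := by omega
    obtain ⟨s, hsub, hscard⟩ := Finset.exists_subset_card_eq hIk
    have hclique := (spCJ_iff G I).1 (hT₀eq ▸ hPT₀)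
    refine ⟨s, ?_, hscard⟩
    intro a ha b hb hab
    exact hclique a (hsub (Finset.mem_coe.1 ha)) b (hsub (Finset.mem_coe.1 hb)) hab
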